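/- Let A ⊆ ℝⁿ with 0 ∈ closure(A \ {0}). For any d > 1 and C > 0, D(ST_d(A;C)) = D(A); that is, the direction set of the sea-tangle neighbourhood of degree d > 1 equals the direction set of A. -/

import Mathlib

open Filter Metric Topology MeasureTheory

noncomputable section

abbrev E (n : ℕ) := EuclideanSpace ℝ (Fin n)

/-- Direction set of `A` at the origin. -/
def Dir (n : ℕ) (A : Set (E n)) : Set (E n) :=
  {a | ‖a‖ = 1 ∧ ∃ x : ℕ → E n, (∀ i, x i ∈ A \ {0}) ∧
    Tendsto x atTop (nhds (0 : E n)) ∧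
    Tendsto (fun i => (‖x i‖)⁻¹ • x i) atTop (nhds a)}

/-- Sea-tangle neighbourhood of degree `d` and width `C`. -/
def STg (n : ℕ) (d C : ℝ) (A : Set (E n)) : Set (E n) :=
  {x | Metric.infDist x A ≤ C * ‖x‖ ^ d}

/-- Cone over the direction set (real tangent cone). -/
def LD (n : ℕ) (A : Set (E n)) : Set (E n) :=
  {x | ∃ a ∈ Dir n A, ∃ t : ℝ, 0 ≤ t ∧ x = t • a}

/-- Sequence selection property. -/
def SSP (n : ℕ) (S : Set (E n)) : Prop :=
  ∀ a : ℕ → E n, (∀ m, a m ≠ 0) → Tendsto a atTop (nhds (0 : E n)) →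
    (∃ L ∈ Dir n S, Tendsto (fun m => (‖a m‖)⁻¹ • a m) atTop (nhds L)) →
    ∀ ε > (0:ℝ), ∃ b : ℕ → E n, (∀ m, b m ∈ S) ∧
      ∀ᶠ m in atTop, ‖a m - b m‖ ≤ ε * min ‖a m‖ ‖b m‖

/-- ST-equivalence of set-germs at the origin. -/
def STEquiv (n : ℕ) (A B : Set (E n)) : Prop :=
  ∃ d₁ > (1:ℝ), ∃ C₁ > (0:ℝ), ∃ d₂ > (1:ℝ), ∃ C₂ > (0:ℝ), ∃ ε > (0:ℝ),
    B ∩ ball (0 : E n) ε ⊆ STg n d₁ C₁ A ∧ A ∩ ball (0 : E n) ε ⊆ STg n d₂ C₂ B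

lemma normalize_sub_le {n : ℕ} (u v : E n) (hu : u ≠ 0) (hv : v ≠ 0) :
    ‖(‖v‖)⁻¹ • v - (‖u‖)⁻¹ • u‖ ≤ 2 * ‖u - v‖ / ‖u‖ := by
  have hr : (0:ℝ) < ‖u‖ := norm_pos_iff.mpr hu
  have hs : (0:ℝ) < ‖v‖ := norm_pos_iff.mpr hv
  have tri : ‖(‖v‖)⁻¹ • v - (‖u‖)⁻¹ • u‖ ≤
      ‖(‖v‖)⁻¹ • v - (‖u‖)⁻¹ • v‖ + ‖(‖u‖)⁻¹ • v - (‖u‖)⁻¹ • u‖ := by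
    have := norm_add_le ((‖v‖)⁻¹ • v - (‖u‖)⁻¹ • v) ((‖u‖)⁻¹ • v - (‖u‖)⁻¹ • u)
    simpa using this
  have h1 : ‖(‖v‖)⁻¹ • v - (‖u‖)⁻¹ • v‖ = |‖v‖⁻¹ - ‖u‖⁻¹| * ‖v‖ := by
    rw [← sub_smul, norm_smul, Real.norm_eq_abs]
  have h2 : ‖(‖u‖)⁻¹ • v - (‖u‖)⁻¹ • u‖ = ‖u - v‖ / ‖u‖ := by
    rw [← smul_sub, norm_smul, Real.norm_eq_abs, abs_inv, abs_of_pos hr,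
      norm_sub_rev, inv_mul_eq_div, div_eq_inv_mul]
  have h3 : |‖v‖⁻¹ - ‖u‖⁻¹| * ‖v‖ = |‖u‖ - ‖v‖| / ‖u‖ := by
    rw [abs_sub_comm]
    rw [inv_sub_inv (ne_of_gt hr) (ne_of_gt hs), abs_div, abs_mul,
      abs_of_pos hr, abs_of_pos hs]
    field_simp
    rw [abs_sub_comm]
  have h4 : |‖u‖ - ‖v‖| ≤ ‖u - v‖ := abs_norm_sub_norm_le u v
  calc ‖(‖v‖)⁻¹ • v - (‖u‖)⁻¹ • u‖ ≤ |‖u‖ - ‖v‖| / ‖u‖ + ‖u - v‖ / ‖u‖ := by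
        rw [h1, h3] at tri; rw [h2] at tri; exact tri
    _ ≤ ‖u - v‖ / ‖u‖ + ‖u - v‖ / ‖u‖ := by gcongr
    _ = 2 * ‖u - v‖ / ‖u‖ := by ring

theorem stmt6 (n : ℕ) (A : Set (E n)) (h0 : (0 : E n) ∈ closure (A \ {0}))
    (d C : ℝ) (hd : 1 < d) (hC : 0 < C) :
    Dir n (STg n d C A) = Dir n A := by
  have hAne : A.Nonempty := by
    have h : (A \ {0}).Nonempty := by
      rcases closure_nonempty_iff.mp ⟨0, h0⟩ with ⟨w, hw⟩
      exact ⟨w, hw⟩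
    exact h.mono Set.diff_subset
  ext a
  constructor
  · rintro ⟨ha1, x, hx, hx0, hxa⟩
    refine ⟨ha1, ?_⟩
    have hxne : ∀ i, x i ≠ 0 := fun i => (hx i).2
    have hpos : ∀ i, (0:ℝ) < ‖x i‖ := fun i => norm_pos_iff.mpr (hxne i)
    have hy : ∀ i, ∃ y ∈ A, dist (x i) y < 2*C*‖x i‖^d := by
      intro i
      have hlt : infDist (x i) A < 2*C*‖x i‖^d := by
        have hp : 0 < C * ‖x i‖^d := mul_pos hC (Real.rpow_pos_of_pos (hpos i) d)
        have := (hx i).1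
        simp only [STg, Set.mem_setOf_eq] at this
        nlinarith
      exact (infDist_lt_iff hAne).mp hlt
    choose y hyA hyd using hy
    have htpos : ∀ i, (0:ℝ) < ‖x i‖ ^ (d-1) := fun i => Real.rpow_pos_of_pos (hpos i) _
    have hnx0 : Tendsto (fun i => ‖x i‖) atTop (nhds 0) := by
      simpa using hx0.norm
    have ht0 : Tendsto (fun i => ‖x i‖ ^ (d-1)) atTop (nhds 0) := by
      have hc : ContinuousAt (fun r : ℝ => r ^ (d-1)) 0 :=
        Real.continuousAt_rpow_const 0 (d-1) (Or.inr (by linarith))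
      have := hc.tendsto.comp hnx0
      simpa [Function.comp_def, Real.zero_rpow (show d - 1 ≠ 0 by intro h; linarith)] using this
    have hbound : ∀ i, ‖x i - y i‖ ≤ 2*C*‖x i‖^(d-1) * ‖x i‖ := by
      intro i
      have hrw : ‖x i‖ ^ d = ‖x i‖^(d-1) * ‖x i‖ := by
        rw [show d = d - 1 + 1 by ring, Real.rpow_add_one (ne_of_gt (hpos i))]
        ring_nf
      calc ‖x i - y i‖ = dist (x i) (y i) := (dist_eq_norm _ _).symm
        _ ≤ 2*C*‖x i‖^d := (hyd i).le
        _ = 2*C*‖x i‖^(d-1)*‖x i‖ := by rw [hrw]; ring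
    have hev : ∀ᶠ i in atTop, 2*C*‖x i‖^(d-1) ≤ 1/2 := by
      have h := (ht0.const_mul (2*C)).eventually_lt_const (show (2*C)*(0:ℝ) < 1/2 by norm_num)
      filter_upwards [h] with i hi
      simpa [mul_comm, mul_assoc] using hi.le
    obtain ⟨N, hN⟩ := eventually_atTop.mp hev
    have key : ∀ i, N ≤ i → y i ≠ 0 ∧ ‖x i‖/2 ≤ ‖y i‖ := by
      intro i hi
      have hb := hbound i
      have h2 := hN i hi
      have h3 : ‖x i‖ - ‖y i‖ ≤ ‖x i - y i‖ := norm_sub_norm_le _ _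
      have hp := hpos i
      have hypos : ‖x i‖/2 ≤ ‖y i‖ := by nlinarith
      exact ⟨fun h => by rw [h] at hypos; simp at hypos; nlinarith, hypos⟩
    refine ⟨fun i => y (i + N), fun i => ⟨hyA _, (key _ (Nat.le_add_left N i)).1⟩, ?_, ?_⟩
    · have hG : Tendsto (fun i => 2 * ‖x (i + N)‖) atTop (nhds 0) := by
        have := (hnx0.comp (tendsto_add_atTop_nat N)).const_mul 2
        simpa using this
      refine squeeze_zero_norm (fun i => ?_) hG
      have hb := hbound (i + N)
      have h2 := hN _ (Nat.le_add_left N i)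
      have h3 : ‖y (i+N)‖ - ‖x (i+N)‖ ≤ ‖x (i+N) - y (i+N)‖ := by
        have := norm_sub_norm_le (y (i+N)) (x (i+N))
        rwa [norm_sub_rev] at this
      have hp := hpos (i+N)
      nlinarith
    · have hg : Tendsto (fun i => (‖x (i+N)‖)⁻¹ • x (i+N)) atTop (nhds a) :=
        hxa.comp (tendsto_add_atTop_nat N)
      have hfg : Tendsto (fun i => (‖y (i+N)‖)⁻¹ • y (i+N) - (‖x (i+N)‖)⁻¹ • x (i+N))
          atTop (nhds 0) := by
        have hG : Tendsto (fun i => 4*C*‖x (i+N)‖^(d-1)) atTop (nhds 0) := by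
          have := (ht0.comp (tendsto_add_atTop_nat N)).const_mul (4*C)
          simpa [Function.comp, mul_assoc] using this
        refine squeeze_zero_norm (fun i => ?_) hG
        have hne := (key _ (Nat.le_add_left N i)).1
        have h1 := normalize_sub_le (x (i+N)) (y (i+N)) (hxne _) hne
        have hb := hbound (i+N)
        have hp := hpos (i+N)
        calc ‖(‖y (i+N)‖)⁻¹ • y (i+N) - (‖x (i+N)‖)⁻¹ • x (i+N)‖
            ≤ 2 * ‖x (i+N) - y (i+N)‖ / ‖x (i+N)‖ := h1
          _ ≤ 4*C*‖x (i+N)‖^(d-1) := by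
              rw [div_le_iff₀ hp]; nlinarith
      have := hfg.add hg
      simpa using this
  · rintro ⟨ha1, x, hx, hx0, hxa⟩
    refine ⟨ha1, x, fun i => ⟨?_, (hx i).2⟩, hx0, hxa⟩
    have : infDist (x i) A = 0 := infDist_zero_of_mem (hx i).1
    simp only [STg, Set.mem_setOf_eq, this]
    positivity
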